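/- arXiv:2402.04485 — 6 statements merged into one kernel-verified Lean document; each statement's English description precedes it below -/
import Mathlib

section
/- Let S̃ be a finite ground set, g : 2^S̃ → ℝ a submodular set function with strictly positive marginal gains (g(S ∪ {i}) > g(S) for all S ⊆ S̃ and i ∈ S̃ \ S), and D̂ : S̃ → ℝ strictly positive costs. For any two budgets 0 < b < b', the outputs S_b = Greedy(S̃, b) and S_{b'} = Greedy(S̃, b') of the budgeted greedy algorithm satisfy: either S_{b'} = S_b, or g(S_{b'}) > g(S_b). (Lemma 5: increasing the input budget of the budgeted greedy algorithm always leads to a no worse output.) -/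
open Finset

variable {ι : Type*}

/-- The marginal-gain-to-cost ratio `(g(S ∪ {u}) − g(S)) / D̂(u)`. -/
noncomputable def marginalRatio [LinearOrder ι] (g : Finset ι → ℝ) (D : ι → ℝ)
    (S : Finset ι) (u : ι) : ℝ :=
  (g (insert u S) - g S) / D u

/-- One run of the while-loop of the budgeted greedy algorithm, with fuel. -/
noncomputable def greedyAux [LinearOrder ι] (g : Finset ι → ℝ) (D : ι → ℝ)
    (Stilde : Finset ι) (b : ℝ) : ℕ → Finset ι → Finset ι
  | 0, S => S
  | n + 1, S =>
    let T := (Stilde \ S).filter fun u => D u + ∑ i ∈ S, D i < b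
    let T' := T.filter fun u => ∀ v ∈ T, marginalRatio g D S v ≤ marginalRatio g D S u
    if h : T'.Nonempty then greedyAux g D Stilde b n (insert (T'.min' h) S) else S

/-- The budgeted greedy algorithm `Greedy(S̃, b)` (Algorithm 2): starting from `S = ∅`,
while the set `T = {u ∈ S̃ \ S : D̂(u) + Σ_{i∈S} D̂(i) < b}` is nonempty, add to `S` the
element of `T` maximizing the marginal-gain-to-cost ratio (ties broken by the linear
order on `ι`). -/
noncomputable def Greedy [LinearOrder ι] (g : Finset ι → ℝ) (D : ι → ℝ)
    (Stilde : Finset ι) (b : ℝ) : Finset ι :=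
  greedyAux g D Stilde b (Stilde.card + 1) ∅

section Aux

variable [LinearOrder ι] (g : Finset ι → ℝ) (D : ι → ℝ) (Stilde : Finset ι)

/-- The feasible candidate set. -/
noncomputable def Tset (b : ℝ) (S : Finset ι) : Finset ι :=
  (Stilde \ S).filter fun u => D u + ∑ i ∈ S, D i < b

/-- The set of ratio-maximizing candidates. -/
noncomputable def Tset' (b : ℝ) (S : Finset ι) : Finset ι :=
  (Tset D Stilde b S).filter fun u => ∀ v ∈ Tset D Stilde b S,
    marginalRatio g D S v ≤ marginalRatio g D S u

lemma greedyAux_succ (b : ℝ) (n : ℕ) (S : Finset ι) :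
    greedyAux g D Stilde b (n + 1) S =
      if h : (Tset' g D Stilde b S).Nonempty then
        greedyAux g D Stilde b n (insert ((Tset' g D Stilde b S).min' h) S) else S := rfl

lemma Tset'_nonempty (b : ℝ) (S : Finset ι) (h : (Tset D Stilde b S).Nonempty) :
    (Tset' g D Stilde b S).Nonempty := by
  obtain ⟨u, hu, hmax⟩ := Finset.exists_max_image (Tset D Stilde b S)
    (marginalRatio g D S) h
  exact ⟨u, Finset.mem_filter.2 ⟨hu, hmax⟩⟩

lemma Tset_empty_of_Tset' (b : ℝ) (S : Finset ι) (h : ¬ (Tset' g D Stilde b S).Nonempty) :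
    Tset D Stilde b S = ∅ := by
  by_contra hne
  exact h (Tset'_nonempty g D Stilde b S (Finset.nonempty_iff_ne_empty.2 hne))

lemma mem_Tset {b : ℝ} {S : Finset ι} {u : ι} :
    u ∈ Tset D Stilde b S ↔ (u ∈ Stilde ∧ u ∉ S) ∧ D u + ∑ i ∈ S, D i < b := by
  simp [Tset, Finset.mem_sdiff, and_assoc]

lemma greedyAux_invariant (hD : ∀ i ∈ Stilde, 0 < D i) (b : ℝ) :
    ∀ n (P : Finset ι), P ⊆ Stilde → (∑ i ∈ P, D i) < b →
      P ⊆ greedyAux g D Stilde b n P ∧ greedyAux g D Stilde b n P ⊆ Stilde ∧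
        (∑ i ∈ greedyAux g D Stilde b n P, D i) < b := by
  intro n
  induction n with
  | zero => intro P hP hc; exact ⟨Finset.Subset.refl _, hP, hc⟩
  | succ n ih =>
    intro P hP hc
    rw [greedyAux_succ]
    by_cases h : (Tset' g D Stilde b P).Nonempty
    · rw [dif_pos h]
      set u := (Tset' g D Stilde b P).min' h with hu
      have huT : u ∈ Tset D Stilde b P :=
        Finset.filter_subset _ _ ((Tset' g D Stilde b P).min'_mem h)
      rw [mem_Tset] at huT
      have hP' : insert u P ⊆ Stilde := Finset.insert_subset huT.1.1 hP
      have hsum : (∑ i ∈ insert u P, D i) = D u + ∑ i ∈ P, D i :=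
        Finset.sum_insert huT.1.2
      have := ih (insert u P) hP' (by rw [hsum]; exact huT.2)
      exact ⟨(Finset.subset_insert u P).trans this.1, this.2.1, this.2.2⟩
    · rw [dif_neg h]; exact ⟨Finset.Subset.refl _, hP, hc⟩

lemma greedyAux_mono (hg_strict : ∀ S : Finset ι, S ⊆ Stilde → ∀ i ∈ Stilde, i ∉ S →
      g S < g (insert i S)) (b : ℝ) :
    ∀ n (P : Finset ι), P ⊆ Stilde → g P ≤ g (greedyAux g D Stilde b n P) := by
  intro n
  induction n with
  | zero => intro P hP; exact le_refl _
  | succ n ih =>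
    intro P hP
    rw [greedyAux_succ]
    by_cases h : (Tset' g D Stilde b P).Nonempty
    · rw [dif_pos h]
      set u := (Tset' g D Stilde b P).min' h with hu
      have huT : u ∈ Tset D Stilde b P :=
        Finset.filter_subset _ _ ((Tset' g D Stilde b P).min'_mem h)
      rw [mem_Tset] at huT
      have hP' : insert u P ⊆ Stilde := Finset.insert_subset huT.1.1 hP
      exact (hg_strict P hP u huT.1.1 huT.1.2).le.trans (ih (insert u P) hP')
    · rw [dif_neg h]

lemma greedyAux_bound
    (hg_submod : ∀ A B : Finset ι, A ⊆ B → B ⊆ Stilde → ∀ i ∈ Stilde, i ∉ B →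
      g (insert i B) - g B ≤ g (insert i A) - g A)
    (hD : ∀ i ∈ Stilde, 0 < D i) (b : ℝ) :
    ∀ n (P : Finset ι), P ⊆ Stilde → (∑ i ∈ P, D i) < b → ∀ r : ℝ,
      (∀ u ∈ Tset D Stilde b P, marginalRatio g D P u ≤ r) →
      g (greedyAux g D Stilde b n P) - g P ≤
        r * ((∑ i ∈ greedyAux g D Stilde b n P, D i) - ∑ i ∈ P, D i) := by
  intro n
  induction n with
  | zero => intro P hP hc r hr; simp [greedyAux]
  | succ n ih =>
    intro P hP hc r hr
    rw [greedyAux_succ]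
    by_cases h : (Tset' g D Stilde b P).Nonempty
    · rw [dif_pos h]
      set u := (Tset' g D Stilde b P).min' h with hu
      have huT : u ∈ Tset D Stilde b P :=
        Finset.filter_subset _ _ ((Tset' g D Stilde b P).min'_mem h)
      have hru : marginalRatio g D P u ≤ r := hr u huT
      rw [mem_Tset] at huT
      have hDu : 0 < D u := hD u huT.1.1
      have hP' : insert u P ⊆ Stilde := Finset.insert_subset huT.1.1 hP
      have hsum : (∑ i ∈ insert u P, D i) = D u + ∑ i ∈ P, D i :=
        Finset.sum_insert huT.1.2
      have hc' : (∑ i ∈ insert u P, D i) < b := by rw [hsum]; exact huT.2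
      -- candidates for `insert u P` are candidates for `P`, with smaller ratio
      have hr' : ∀ w ∈ Tset D Stilde b (insert u P), marginalRatio g D (insert u P) w ≤ r := by
        intro w hw
        rw [mem_Tset] at hw
        have hwP : w ∉ P := fun hwP => hw.1.2 (Finset.mem_insert_of_mem hwP)
        have hwT : w ∈ Tset D Stilde b P := by
          rw [mem_Tset]
          exact ⟨⟨hw.1.1, hwP⟩, by rw [hsum] at hw; linarith [hw.2, hDu.le]⟩
        have hDw : 0 < D w := hD w hw.1.1
        have hnum := hg_submod P (insert u P) (Finset.subset_insert u P) hP' w hw.1.1 hw.1.2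
        calc marginalRatio g D (insert u P) w ≤ marginalRatio g D P w := by
              unfold marginalRatio
              exact div_le_div_of_nonneg_right hnum hDw.le
          _ ≤ r := hr w hwT
      have hIH := ih (insert u P) hP' hc' r hr'
      have hstep : g (insert u P) - g P = marginalRatio g D P u * D u := by
        unfold marginalRatio
        field_simp
      have hstep' : g (insert u P) - g P ≤ r * D u := by
        rw [hstep]
        exact mul_le_mul_of_nonneg_right hru hDu.le
      have hring : r * ((∑ i ∈ greedyAux g D Stilde b n (insert u P), D i)
          - ∑ i ∈ insert u P, D i) + r * D u
          = r * ((∑ i ∈ greedyAux g D Stilde b n (insert u P), D i) - ∑ i ∈ P, D i) := by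
        rw [hsum]; ring
      linarith
    · rw [dif_neg h]; simp

lemma greedyAux_main
    (hg_submod : ∀ A B : Finset ι, A ⊆ B → B ⊆ Stilde → ∀ i ∈ Stilde, i ∉ B →
      g (insert i B) - g B ≤ g (insert i A) - g A)
    (hg_strict : ∀ S : Finset ι, S ⊆ Stilde → ∀ i ∈ Stilde, i ∉ S → g S < g (insert i S))
    (hD : ∀ i ∈ Stilde, 0 < D i)
    (b b' : ℝ) (hb : 0 < b) (hbb' : b < b') :
    ∀ n (P : Finset ι), P ⊆ Stilde → (Stilde \ P).card < n → (∑ i ∈ P, D i) < b →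
      greedyAux g D Stilde b' n P = greedyAux g D Stilde b n P ∨
        g (greedyAux g D Stilde b n P) < g (greedyAux g D Stilde b' n P) := by
  intro n
  induction n with
  | zero => intro P hP hcard hc; omega
  | succ n ih =>
    intro P hP hcard hc
    have hTsub : Tset D Stilde b P ⊆ Tset D Stilde b' P := by
      intro w hw
      rw [mem_Tset] at hw ⊢
      exact ⟨hw.1, hw.2.trans hbb'⟩
    by_cases h' : (Tset' g D Stilde b' P).Nonempty
    · set v := (Tset' g D Stilde b' P).min' h' with hv
      have hvT' : v ∈ Tset' g D Stilde b' P := (Tset' g D Stilde b' P).min'_mem h'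
      have hvmax : ∀ w ∈ Tset D Stilde b' P,
          marginalRatio g D P w ≤ marginalRatio g D P v :=
        (Finset.mem_filter.1 hvT').2
      have hvTb' : v ∈ Tset D Stilde b' P := Finset.filter_subset _ _ hvT'
      have hvS : v ∈ Stilde ∧ v ∉ P := ((mem_Tset D Stilde).1 hvTb').1
      by_cases hvT : v ∈ Tset D Stilde b P
      · -- both runs pick the same element
        have hTne : (Tset D Stilde b P).Nonempty := ⟨v, hvT⟩
        have h : (Tset' g D Stilde b P).Nonempty := Tset'_nonempty g D Stilde b P hTne
        set u := (Tset' g D Stilde b P).min' h with hu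
        have huT' : u ∈ Tset' g D Stilde b P := (Tset' g D Stilde b P).min'_mem h
        have humax : ∀ w ∈ Tset D Stilde b P,
            marginalRatio g D P w ≤ marginalRatio g D P u :=
          (Finset.mem_filter.1 huT').2
        have huTb : u ∈ Tset D Stilde b P := Finset.filter_subset _ _ huT'
        have hratio : marginalRatio g D P u = marginalRatio g D P v :=
          le_antisymm (hvmax u (hTsub huTb)) (humax v hvT)
        have huv : u = v := by
          have h1 : u ≤ v := Finset.min'_le _ v (Finset.mem_filter.2
            ⟨hvT, fun w hw => (humax w hw).trans hratio.le⟩)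
          have h2 : v ≤ u := Finset.min'_le _ u (Finset.mem_filter.2
            ⟨hTsub huTb, fun w hw => (hvmax w hw).trans hratio.ge⟩)
          exact le_antisymm h1 h2
        rw [greedyAux_succ, greedyAux_succ, dif_pos h', dif_pos h, ← hv, ← hu, huv]
        rw [mem_Tset] at hvT
        have hP' : insert v P ⊆ Stilde := Finset.insert_subset hvT.1.1 hP
        have hcard' : (Stilde \ insert v P).card < n := by
          have hss : Stilde \ insert v P ⊂ Stilde \ P := by
            refine Finset.ssubset_iff_of_subset (Finset.sdiff_subset_sdiff
              (Finset.Subset.refl _) (Finset.subset_insert v P)) |>.2 ?_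
            exact ⟨v, Finset.mem_sdiff.2 ⟨hvT.1.1, hvT.1.2⟩, by simp⟩
          have := Finset.card_lt_card hss
          omega
        have hc' : (∑ i ∈ insert v P, D i) < b := by
          rw [Finset.sum_insert hvT.1.2]; exact hvT.2
        exact ih (insert v P) hP' hcard' hc'
      · -- the runs diverge: budget-b' pick is infeasible under b
        right
        rw [mem_Tset] at hvTb'
        have hvcost : b ≤ D v + ∑ i ∈ P, D i := by
          by_contra hlt
          exact hvT ((mem_Tset D Stilde).2 ⟨hvS, not_le.1 hlt⟩)
        have hDv : 0 < D v := hD v hvS.1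
        set r := marginalRatio g D P v with hr
        have hrpos : 0 < r := by
          have := hg_strict P hP v hvS.1 hvS.2
          exact div_pos (by linarith) hDv
        have hrmax : ∀ w ∈ Tset D Stilde b P, marginalRatio g D P w ≤ r :=
          fun w hw => hvmax w (hTsub hw)
        have hbound := greedyAux_bound g D Stilde hg_submod hD b (n + 1) P hP hc r hrmax
        obtain ⟨hPR, hRS, hRc⟩ := greedyAux_invariant g D Stilde hD b (n + 1) P hP hc
        have hkey : g (greedyAux g D Stilde b (n + 1) P) < g (insert v P) := by
          have h1 : r * ((∑ i ∈ greedyAux g D Stilde b (n + 1) P, D i) - ∑ i ∈ P, D i)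
              < r * (b - ∑ i ∈ P, D i) :=
            mul_lt_mul_of_pos_left (by linarith) hrpos
          have h2 : r * (b - ∑ i ∈ P, D i) ≤ r * D v :=
            mul_le_mul_of_nonneg_left (by linarith) hrpos.le
          have h3 : r * D v = g (insert v P) - g P := by
            rw [hr]; unfold marginalRatio; field_simp
          linarith
        have hP' : insert v P ⊆ Stilde := Finset.insert_subset hvS.1 hP
        have hmono : g (insert v P) ≤ g (greedyAux g D Stilde b' n (insert v P)) :=
          greedyAux_mono g D Stilde hg_strict b' n (insert v P) hP'
        rw [greedyAux_succ g D Stilde b' n P, dif_pos h']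
        rw [← hv]
        linarith
    · -- the larger budget has no candidates, so neither does the smaller
      left
      have hTb' : Tset D Stilde b' P = ∅ := Tset_empty_of_Tset' g D Stilde b' P h'
      have hTb : Tset D Stilde b P = ∅ :=
        Finset.eq_empty_of_forall_notMem fun w hw => by
          rw [hTb'] at hTsub; exact absurd (hTsub hw) (Finset.notMem_empty w)
      have h : ¬ (Tset' g D Stilde b P).Nonempty := by
        intro hne
        obtain ⟨w, hw⟩ := hne
        rw [Tset', hTb] at hw
        simp at hw
      rw [greedyAux_succ, greedyAux_succ, dif_neg h', dif_neg h]

end Aux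

/-- Lemma 5: increasing the input budget of the budgeted greedy algorithm always leads
to a no worse output: for budgets `0 < b < b'`, either `Greedy(S̃, b') = Greedy(S̃, b)`
or `g(Greedy(S̃, b')) > g(Greedy(S̃, b))`. -/
theorem greedy_budget_monotone [LinearOrder ι] (Stilde : Finset ι) (g : Finset ι → ℝ)
    (hg_submod : ∀ A B : Finset ι, A ⊆ B → B ⊆ Stilde → ∀ i ∈ Stilde, i ∉ B →
      g (insert i B) - g B ≤ g (insert i A) - g A)
    (hg_strict : ∀ S : Finset ι, S ⊆ Stilde → ∀ i ∈ Stilde, i ∉ S → g S < g (insert i S))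
    (D : ι → ℝ) (hD : ∀ i ∈ Stilde, 0 < D i)
    (b b' : ℝ) (hb : 0 < b) (hbb' : b < b') :
    Greedy g D Stilde b' = Greedy g D Stilde b ∨
      g (Greedy g D Stilde b) < g (Greedy g D Stilde b') := by
  refine greedyAux_main g D Stilde hg_submod hg_strict hD b b' hb hbb'
    (Stilde.card + 1) ∅ (Finset.empty_subset _) ?_ (by simpa using hb)
  simp
end

section
/- Let d, t, m be positive integers with m ≤ t, and let λ > 0 and L > 0. Let X ∈ ℝ^{m×d} be a matrix whose rows x_1, …, x_m all satisfy ‖x_s‖₂ ≤ L, and let Ṽ ∈ ℝ^{d×d} be a symmetric matrix such that Ṽ − XᵀX − λI_d is positive semidefinite. Then det(Ṽ − XᵀX) / det(Ṽ) ≥ (1 + tL²/(λd))^{−d}. (Core matrix inequality of Lemma 2: with parameter β ≤ (1 + tL²/(λd))^{−d}, no client can be essential, eliminating infinite critical values.) -/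
open Matrix

open Finset in

-- AM-GM: product of nonneg reals ≤ (avg)^card
lemma prod_le_avg_pow {d : ℕ} (hd : 0 < d) (z : Fin d → ℝ) (hz : ∀ i, 0 ≤ z i) :
    ∏ i, z i ≤ ((∑ i, z i) / d) ^ d := by
  have hw : ∀ i ∈ Finset.univ (α := Fin d), (0:ℝ) ≤ 1 / d := fun _ _ => by positivity
  have hw' : ∑ _i : Fin d, (1:ℝ)/d = 1 := by
    simp [Finset.sum_const, Finset.card_univ]
    field_simp
  have h := Real.geom_mean_le_arith_mean_weighted Finset.univ (fun _ => 1/d) z hw hw'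
    (fun i _ => hz i)
  have key : (∏ i, z i ^ ((1:ℝ)/d)) ^ d = ∏ i, z i := by
    rw [← Finset.prod_pow]
    refine Finset.prod_congr rfl fun i _ => ?_
    rw [← Real.rpow_natCast (z i ^ ((1:ℝ)/d)) d, ← Real.rpow_mul (hz i)]
    simp [one_div, inv_mul_cancel₀ (by exact_mod_cast hd.ne' : (d:ℝ) ≠ 0)]
  calc ∏ i, z i = (∏ i, z i ^ ((1:ℝ)/d)) ^ d := key.symm
    _ ≤ ((∑ i, (1/d) * z i)) ^ d := by
        apply pow_le_pow_left₀ (Finset.prod_nonneg fun i _ => Real.rpow_nonneg (hz i) _) h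
    _ = ((∑ i, z i) / d) ^ d := by
        congr 1
        rw [Finset.sum_div]
        exact Finset.sum_congr rfl fun i _ => by ring

-- det(1+M) ≤ (1 + trace M / d)^d for PSD real M
lemma det_one_add_le {d : ℕ} (hd : 0 < d) {M : Matrix (Fin d) (Fin d) ℝ}
    (hM : M.PosSemidef) : (1 + M).det ≤ (1 + M.trace / d) ^ d := by
  have h := hM.isHermitian
  set U : Matrix (Fin d) (Fin d) ℝ := (h.eigenvectorUnitary : Matrix (Fin d) (Fin d) ℝ) with hU
  have hUU : U * star U = 1 := (Matrix.mem_unitaryGroup_iff).mp h.eigenvectorUnitary.2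
  have hUU' : star U * U = 1 := (Matrix.mem_unitaryGroup_iff').mp h.eigenvectorUnitary.2
  have hspec : M = U * diagonal h.eigenvalues * star U := by
    simpa using h.spectral_theorem
  have hdet : (1 + M).det = ∏ i, (1 + h.eigenvalues i) := by
    have key : 1 + M = U * diagonal (fun i => 1 + h.eigenvalues i) * star U := by
      have hdg : (diagonal fun i => 1 + h.eigenvalues i) = 1 + diagonal h.eigenvalues := by
        rw [← diagonal_one, diagonal_add]
      rw [hdg, mul_add, add_mul, mul_one, hUU, ← hspec]
    rw [key, det_mul_right_comm, hUU, one_mul, det_diagonal]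
  have htr : M.trace = ∑ i, h.eigenvalues i := by
    calc M.trace = (U * diagonal h.eigenvalues * star U).trace := by rw [← hspec]
      _ = ∑ i, h.eigenvalues i := by
          rw [trace_mul_comm, ← mul_assoc, hUU', one_mul, trace_diagonal]
  rw [hdet, htr]
  have := prod_le_avg_pow hd (fun i => 1 + h.eigenvalues i)
    (fun i => by have := hM.eigenvalues_nonneg i; linarith)
  calc ∏ i, (1 + h.eigenvalues i) ≤ ((∑ i, (1 + h.eigenvalues i)) / d) ^ d := this
    _ = (1 + (∑ i, h.eigenvalues i) / d) ^ d := by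
        congr 1
        rw [Finset.sum_add_distrib, Finset.sum_const, Finset.card_univ, Fintype.card_fin,
          add_div, nsmul_eq_mul]
        field_simp


/-- Core matrix inequality of Lemma 2 (elimination of infinite critical values): if the
rows of `X ∈ ℝ^{m×d}` have Euclidean norm at most `L` (with `m ≤ t`) and the symmetric
matrix `Ṽ` satisfies `Ṽ − XᵀX − λI ⪰ 0`, then
`det(Ṽ − XᵀX)/det(Ṽ) ≥ (1 + tL²/(λd))^{−d}`. -/
theorem det_ratio_lower_bound (d t m : ℕ) (hd : 0 < d) (ht : 0 < t) (hm : 0 < m)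
    (hmt : m ≤ t) (lam L : ℝ) (hlam : 0 < lam) (hL : 0 < L)
    (X : Matrix (Fin m) (Fin d) ℝ)
    (hX : ∀ s : Fin m, ‖(WithLp.equiv 2 (Fin d → ℝ)).symm (X s)‖ ≤ L)
    (V : Matrix (Fin d) (Fin d) ℝ) (hV : V.IsSymm)
    (hpsd : (V - Xᵀ * X - lam • (1 : Matrix (Fin d) (Fin d) ℝ)).PosSemidef) :
    ((1 : ℝ) + t * L ^ 2 / (lam * d)) ^ (-(d : ℤ)) ≤ (V - Xᵀ * X).det / V.det := by
  set A : Matrix (Fin d) (Fin d) ℝ := V - Xᵀ * X with hAdef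
  set N : Matrix (Fin d) (Fin d) ℝ := Xᵀ * X with hNdef
  have hN : N.PosSemidef := by
    have := Matrix.posSemidef_conjTranspose_mul_self X
    simpa [hNdef] using this
  -- A is positive definite
  have hA : A.PosDef := by
    have h1 : (lam • (1 : Matrix (Fin d) (Fin d) ℝ)).PosDef := by
      refine Matrix.PosDef.of_dotProduct_mulVec_pos ?_ ?_
      · unfold Matrix.IsHermitian
        simp [Matrix.conjTranspose_smul]
      · intro x hx
        simp only [smul_mulVec, one_mulVec, dotProduct_smul, smul_eq_mul]
        have : 0 < dotProduct (star x) x := by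
          exact Matrix.dotProduct_star_self_pos_iff.mpr hx
        exact mul_pos hlam this
    have : A = (A - lam • 1) + lam • 1 := by abel
    rw [this]
    exact Matrix.PosDef.posSemidef_add hpsd h1
  have hAdet : 0 < A.det := hA.det_pos
  open scoped MatrixOrder in
  set S : Matrix (Fin d) (Fin d) ℝ := CFC.sqrt A with hSdef
  open scoped MatrixOrder in
  have hS : S.PosSemidef := (CFC.sqrt_nonneg A).posSemidef
  open scoped MatrixOrder in
  have hSS : S * S = A := CFC.sqrt_mul_sqrt_self A hA.posSemidef.nonneg
  have hSdet : IsUnit S.det := by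
    have h2 : S.det * S.det = A.det := by rw [← det_mul, hSS]
    have : S.det ≠ 0 := by
      intro h0; rw [h0, mul_zero] at h2; exact hAdet.ne' h2.symm
    exact this.isUnit
  have hSinv : S * S⁻¹ = 1 := Matrix.mul_nonsing_inv S hSdet
  have hSinv' : S⁻¹ * S = 1 := Matrix.nonsing_inv_mul S hSdet
  have hTsymm : (S⁻¹)ᴴ = S⁻¹ := hS.isHermitian.inv
  have hTT : S⁻¹ * S⁻¹ = A⁻¹ := by rw [← Matrix.mul_inv_rev, hSS]
  set M : Matrix (Fin d) (Fin d) ℝ := S⁻¹ * N * S⁻¹ with hMdef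
  have hM : M.PosSemidef := by
    have := hN.mul_mul_conjTranspose_same S⁻¹
    rwa [hTsymm] at this
  -- decomposition of V
  have hVdec : V = S * (1 + M) * S := by
    have hAN : A + N = V := by simp [hAdef]
    calc V = A + N := hAN.symm
      _ = S * (1 + M) * S := by
          rw [mul_add, add_mul, mul_one, hSS, hMdef]
          congr 1
          calc N = 1 * N * 1 := by rw [one_mul, mul_one]
            _ = (S * S⁻¹) * N * (S⁻¹ * S) := by rw [hSinv, hSinv']
            _ = S * (S⁻¹ * N * S⁻¹) * S := by noncomm_ring
  have hdetV : V.det = A.det * (1 + M).det := by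
    rw [hVdec, det_mul, det_mul, ← hSS, det_mul]
    ring
  -- trace bound
  have hQ : ∀ x : Fin d → ℝ, x ⬝ᵥ (A⁻¹ *ᵥ x) ≤ (x ⬝ᵥ x) / lam := by
    have hP : (lam⁻¹ • (1 : Matrix (Fin d) (Fin d) ℝ) - A⁻¹).PosSemidef := by
      have hinner : (lam⁻¹ • (A - lam • 1)).PosSemidef := by
        refine Matrix.PosSemidef.of_dotProduct_mulVec_nonneg ?_ ?_
        · unfold Matrix.IsHermitian
          rw [Matrix.conjTranspose_smul, hpsd.isHermitian.eq]
          simp [star]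
        · intro x
          rw [smul_mulVec, dotProduct_smul, smul_eq_mul]
          exact mul_nonneg (by positivity) (hpsd.dotProduct_mulVec_nonneg x)
      have := hinner.mul_mul_conjTranspose_same S⁻¹
      rw [hTsymm] at this
      have heq : S⁻¹ * (lam⁻¹ • (A - lam • 1)) * S⁻¹
          = lam⁻¹ • (1 : Matrix (Fin d) (Fin d) ℝ) - A⁻¹ := by
        have hSAS : S⁻¹ * A * S⁻¹ = 1 := by
          rw [← hSS, ← Matrix.mul_assoc, Matrix.mul_assoc, hSinv, hSinv', Matrix.mul_one]
        calc S⁻¹ * (lam⁻¹ • (A - lam • 1)) * S⁻¹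
            = lam⁻¹ • (S⁻¹ * (A - lam • 1) * S⁻¹) := by
              rw [Matrix.mul_smul, Matrix.smul_mul]
          _ = lam⁻¹ • (S⁻¹ * A * S⁻¹ - lam • (S⁻¹ * S⁻¹)) := by
              rw [mul_sub, sub_mul]
              congr 2
              rw [Matrix.mul_smul, Matrix.mul_one, Matrix.smul_mul]
          _ = lam⁻¹ • (1 : Matrix (Fin d) (Fin d) ℝ) - lam⁻¹ • (lam • A⁻¹) := by
              rw [hSAS, hTT, smul_sub]
          _ = lam⁻¹ • (1 : Matrix (Fin d) (Fin d) ℝ) - A⁻¹ := by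
              rw [smul_smul, inv_mul_cancel₀ hlam.ne', one_smul]
      rwa [heq] at this
    intro x
    have := hP.dotProduct_mulVec_nonneg x
    simp only [sub_mulVec, dotProduct_sub, smul_mulVec, one_mulVec, dotProduct_smul,
      smul_eq_mul, star_trivial, sub_nonneg] at this
    calc x ⬝ᵥ (A⁻¹ *ᵥ x) ≤ lam⁻¹ * (x ⬝ᵥ x) := this
      _ = (x ⬝ᵥ x) / lam := by rw [div_eq_inv_mul]
  have hrow : ∀ s : Fin m, (X s) ⬝ᵥ (X s) ≤ L ^ 2 := by
    intro s
    have hnorm : ‖(WithLp.equiv 2 (Fin d → ℝ)).symm (X s)‖ ^ 2 = (X s) ⬝ᵥ (X s) := by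
      rw [EuclideanSpace.norm_eq]
      rw [Real.sq_sqrt (by positivity)]
      simp [dotProduct, sq]
    calc (X s) ⬝ᵥ (X s) = ‖(WithLp.equiv 2 (Fin d → ℝ)).symm (X s)‖ ^ 2 := hnorm.symm
      _ ≤ L ^ 2 := by
          apply pow_le_pow_left₀ (norm_nonneg _) (hX s)
  have htrM : M.trace ≤ t * L ^ 2 / lam := by
    have h1 : M.trace = (X * A⁻¹ * Xᵀ).trace := by
      calc M.trace = (S⁻¹ * N * S⁻¹).trace := rfl
        _ = (S⁻¹ * (S⁻¹ * N)).trace := by rw [Matrix.trace_mul_comm]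
        _ = ((S⁻¹ * S⁻¹) * N).trace := by rw [Matrix.mul_assoc]
        _ = (A⁻¹ * Xᵀ * X).trace := by rw [hTT, hNdef, Matrix.mul_assoc]
        _ = (X * (A⁻¹ * Xᵀ)).trace := Matrix.trace_mul_comm _ _
        _ = (X * A⁻¹ * Xᵀ).trace := by rw [Matrix.mul_assoc]
    have h2 : ∀ s : Fin m, (X * A⁻¹ * Xᵀ) s s = (X s) ⬝ᵥ (A⁻¹ *ᵥ (X s)) := by
      intro s
      simp only [mul_apply, transpose_apply, dotProduct, mulVec,
        Finset.sum_mul, Finset.mul_sum]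
      rw [Finset.sum_comm]
      exact Finset.sum_congr rfl fun i _ => Finset.sum_congr rfl fun j _ => by ring
    have h3 : (X * A⁻¹ * Xᵀ).trace ≤ m * (L ^ 2 / lam) := by
      rw [Matrix.trace]
      calc ∑ s, (X * A⁻¹ * Xᵀ).diag s ≤ ∑ _s : Fin m, L ^ 2 / lam := by
            apply Finset.sum_le_sum
            intro s _
            rw [Matrix.diag_apply, h2 s]
            calc (X s) ⬝ᵥ (A⁻¹ *ᵥ (X s)) ≤ ((X s) ⬝ᵥ (X s)) / lam := hQ (X s)
              _ ≤ L ^ 2 / lam := by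
                  gcongr
                  exact hrow s
        _ = m * (L ^ 2 / lam) := by simp [Finset.sum_const, Finset.card_univ]
    calc M.trace = (X * A⁻¹ * Xᵀ).trace := h1
      _ ≤ m * (L ^ 2 / lam) := h3
      _ ≤ t * L ^ 2 / lam := by
          rw [mul_div_assoc]
          apply mul_le_mul_of_nonneg_right _ (by positivity)
          exact_mod_cast hmt
  -- finish
  have htrnn : 0 ≤ M.trace := by
    rw [Matrix.trace]
    apply Finset.sum_nonneg
    intro i _
    have := hM.dotProduct_mulVec_nonneg (Pi.single i 1)
    simpa [mulVec, dotProduct, Pi.single_apply] using this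
  set c : ℝ := t * L ^ 2 / (lam * d) with hc
  have hcpos : 0 ≤ c := by positivity
  have hDle : (1 + M).det ≤ (1 + c) ^ d := by
    calc (1 + M).det ≤ (1 + M.trace / d) ^ d := det_one_add_le hd hM
      _ ≤ (1 + c) ^ d := by
          apply pow_le_pow_left₀ (by positivity)
          have hdr : (0:ℝ) < d := by exact_mod_cast hd
          have : M.trace / d ≤ (t * L ^ 2 / lam) / d := by gcongr
          rw [div_div] at this
          linarith
  have hDpos : 0 < (1 + M).det := (Matrix.PosDef.one.add_posSemidef hM).det_pos
  have hratio : A.det / V.det = ((1 + M).det)⁻¹ := by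
    rw [hdetV]
    field_simp
  rw [hratio, _root_.zpow_neg, zpow_natCast]
  exact inv_anti₀ hDpos hDle
end

section
/- Let λ > 0, let A ∈ ℝ^{d×d} be symmetric, and let X ∈ ℝ^{m×d} be such that A − XᵀX − λI_d is positive semidefinite. Then A and A − XᵀX are positive definite (hence invertible), and det(A − XᵀX)/det(A) ≥ λ^d / det(λI_d + XᵀX). -/
open Matrix

set_option linter.unusedSectionVars false
set_option maxHeartbeats 1000000

section Aux
variable {n : Type*} [Fintype n] [DecidableEq n]

lemma herm_smul {M : Matrix n n ℝ} (hM : M.IsHermitian) (c : ℝ) :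
    (c • M).IsHermitian := by
  rw [Matrix.IsHermitian, conjTranspose_smul, star_trivial, hM.eq]

lemma psd_smul {M : Matrix n n ℝ} (hM : M.PosSemidef) {c : ℝ} (hc : 0 ≤ c) :
    (c • M).PosSemidef := by
  refine PosSemidef.of_dotProduct_mulVec_nonneg (herm_smul hM.1 c) (fun x => ?_)
  rw [smul_mulVec, dotProduct_smul, smul_eq_mul]
  exact mul_nonneg hc (hM.dotProduct_mulVec_nonneg x)

lemma smul_one_posdef {c : ℝ} (hc : 0 < c) : (c • (1 : Matrix n n ℝ)).PosDef := by
  refine PosDef.of_dotProduct_mulVec_pos (herm_smul isHermitian_one c) (fun x hx => ?_)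
  rw [smul_mulVec, one_mulVec, dotProduct_smul, smul_eq_mul]
  exact mul_pos hc (dotProduct_star_self_pos_iff.mpr hx)

lemma one_le_det_of_psd {M : Matrix n n ℝ} (h1 : (M - 1).PosSemidef) : 1 ≤ M.det := by
  have hH : M.IsHermitian := by
    have := h1.1.add (isHermitian_one (n := n) (α := ℝ))
    simpa using this
  have key : ∀ i : n, 1 ≤ hH.eigenvalues i := by
    intro i
    set v := ⇑(hH.eigenvectorBasis i) with hv
    have hv0 : v ≠ 0 := fun h => hH.eigenvectorBasis.orthonormal.ne_zero i
      (by ext j; exact congrFun h j)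
    have hpos : 0 < star v ⬝ᵥ v := dotProduct_star_self_pos_iff.mpr hv0
    have h2 := h1.dotProduct_mulVec_nonneg v
    rw [sub_mulVec, one_mulVec, dotProduct_sub, hH.mulVec_eigenvectorBasis,
      dotProduct_smul, smul_eq_mul, sub_nonneg] at h2
    have h3 : 1 * (star v ⬝ᵥ v) ≤ hH.eigenvalues i * (star v ⬝ᵥ v) := by
      simpa using h2
    exact le_of_mul_le_mul_right h3 hpos
  rw [hH.det_eq_prod_eigenvalues]
  calc (1:ℝ) = ∏ _i : n, (1:ℝ) := by simp
    _ ≤ ∏ i : n, (hH.eigenvalues i : ℝ) :=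
        Finset.prod_le_prod (fun i _ => by norm_num) (fun i _ => key i)

lemma conj_gadget {P : Matrix n n ℝ} (hP : P.PosDef) :
    ∃ S : Matrix n n ℝ, S.IsHermitian ∧ S * S = P⁻¹ ∧ S * P * S = 1 := by
  have hPinv : P⁻¹.PosDef := hP.inv
  obtain ⟨S0, hS0h, hS0sq⟩ : ∃ S : Matrix n n ℝ, S.IsHermitian ∧ S * S = P⁻¹ := by
    open scoped MatrixOrder in
    exact ⟨CFC.sqrt P⁻¹, (CFC.sqrt_nonneg _).posSemidef.1,
      CFC.sqrt_mul_sqrt_self _ hPinv.posSemidef.nonneg⟩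
  refine ⟨S0, hS0h, hS0sq, ?_⟩
  set S := S0 with hS
  have hSS : S * S = P⁻¹ := hS0sq
  have hdet : IsUnit S.det := by
    have h0 : S.det * S.det = P⁻¹.det := by rw [← det_mul, hSS]
    have : S.det ≠ 0 := by
      intro h
      rw [h, mul_zero] at h0
      exact hPinv.det_pos.ne h0
    exact this.isUnit
  have hPdet : IsUnit P.det := hP.det_pos.ne'.isUnit
  have hPeq : P = S⁻¹ * S⁻¹ := by
    rw [← Matrix.mul_inv_rev, hSS, Matrix.nonsing_inv_nonsing_inv _ hPdet]
  rw [hPeq, ← Matrix.mul_assoc S S⁻¹ S⁻¹, Matrix.mul_nonsing_inv _ hdet,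
    Matrix.one_mul, Matrix.nonsing_inv_mul _ hdet]

lemma det_mono {P Q : Matrix n n ℝ} (hP : P.PosDef) (h : (Q - P).PosSemidef) :
    P.det ≤ Q.det := by
  obtain ⟨S, hSh, hSS, hSPS⟩ := conj_gadget hP
  have hconj : (S * (Q - P) * Sᴴ).PosSemidef := h.mul_mul_conjTranspose_same S
  rw [hSh.eq] at hconj
  have heq : S * (Q - P) * S = S * Q * S - 1 := by
    rw [Matrix.mul_sub, Matrix.sub_mul, hSPS]
  rw [heq] at hconj
  have h1 : 1 ≤ (S * Q * S).det := one_le_det_of_psd hconj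
  have h2 : (S * Q * S).det = P⁻¹.det * Q.det := by
    rw [det_mul, det_mul, mul_comm, ← mul_assoc, ← det_mul, hSS]
  rw [h2, Matrix.det_nonsing_inv] at h1
  have hp := hP.det_pos
  have hinv : P.det * (P.det)⁻¹ = 1 := mul_inv_cancel₀ hp.ne'
  have hq : Ring.inverse P.det = (P.det)⁻¹ := Ring.inverse_eq_inv _
  rw [hq] at h1
  nlinarith

lemma inv_bound {B : Matrix n n ℝ} {lam : ℝ} (hlam : 0 < lam) (hB : B.PosDef)
    (h : (B - lam • 1).PosSemidef) :
    ((lam⁻¹ • (1 : Matrix n n ℝ)) - B⁻¹).PosSemidef := by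
  obtain ⟨S, hSh, hSS, hSPS⟩ := conj_gadget hB
  have hconj : (S * (B - lam • 1) * Sᴴ).PosSemidef := h.mul_mul_conjTranspose_same S
  rw [hSh.eq] at hconj
  have heq : S * (B - lam • 1) * S = 1 - lam • B⁻¹ := by
    rw [Matrix.mul_sub, Matrix.sub_mul, hSPS, Matrix.mul_smul, Matrix.mul_one,
      Matrix.smul_mul, hSS]
  rw [heq] at hconj
  have h2 := psd_smul hconj (le_of_lt (inv_pos.mpr hlam))
  have heq2 : lam⁻¹ • ((1 : Matrix n n ℝ) - lam • B⁻¹) = lam⁻¹ • 1 - B⁻¹ := by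
    rw [smul_sub, smul_smul, inv_mul_cancel₀ hlam.ne', one_smul]
  rwa [heq2] at h2

end Aux

/-- Main chain of inequalities in the proof of the elimination of infinite critical
values: if `A − XᵀX − λI ⪰ 0` with `λ > 0`, then `A` and `A − XᵀX` are positive
definite (hence invertible), and `det(A − XᵀX)/det(A) ≥ λ^d / det(λI + XᵀX)`. -/
theorem det_ratio_chain (d m : ℕ) (lam : ℝ) (hlam : 0 < lam)
    (A : Matrix (Fin d) (Fin d) ℝ) (hA : A.IsSymm)
    (X : Matrix (Fin m) (Fin d) ℝ)
    (hpsd : (A - Xᵀ * X - lam • (1 : Matrix (Fin d) (Fin d) ℝ)).PosSemidef) :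
    A.PosDef ∧ (A - Xᵀ * X).PosDef ∧
      lam ^ d / (lam • (1 : Matrix (Fin d) (Fin d) ℝ) + Xᵀ * X).det ≤
        (A - Xᵀ * X).det / A.det := by
  have hXX : (Xᵀ * X).PosSemidef := by
    have := Matrix.posSemidef_conjTranspose_mul_self X
    rwa [conjTranspose_eq_transpose_of_trivial] at this
  set B := A - Xᵀ * X with hBdef
  have hBpos : B.PosDef := by
    have h := Matrix.PosDef.posSemidef_add hpsd (smul_one_posdef hlam)
    have e : A - Xᵀ * X - lam • (1 : Matrix (Fin d) (Fin d) ℝ) + lam • 1 = B := by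
      rw [hBdef]; abel
    rwa [e] at h
  have hApos : A.PosDef := by
    have h := hBpos.add_posSemidef hXX
    have e : B + Xᵀ * X = A := by rw [hBdef]; abel
    rwa [e] at h
  refine ⟨hApos, hBpos, ?_⟩
  have hBdetpos := hBpos.det_pos
  have hAdetpos := hApos.det_pos
  have hBunit : IsUnit B.det := hBdetpos.ne'.isUnit
  set C1 : Matrix (Fin m) (Fin m) ℝ := 1 + X * B⁻¹ * Xᵀ with hC1
  set C2 : Matrix (Fin m) (Fin m) ℝ :=
    1 + X * (lam⁻¹ • (1 : Matrix (Fin d) (Fin d) ℝ)) * Xᵀ with hC2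
  -- C1 posdef
  have hC1psd : (X * B⁻¹ * Xᵀ).PosSemidef := by
    have := hBpos.inv.posSemidef.mul_mul_conjTranspose_same X
    rwa [conjTranspose_eq_transpose_of_trivial] at this
  have hone : ((1:ℝ) • (1 : Matrix (Fin m) (Fin m) ℝ)).PosDef := smul_one_posdef one_pos
  rw [one_smul] at hone
  have hC1pos : C1.PosDef := hone.add_posSemidef hC1psd
  -- det A = det B * det C1
  have hAfac : A = B * (1 + B⁻¹ * (Xᵀ * X)) := by
    rw [Matrix.mul_add, Matrix.mul_one, ← Matrix.mul_assoc,
      Matrix.mul_nonsing_inv _ hBunit, Matrix.one_mul, hBdef]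
    abel
  have hdetA : A.det = B.det * C1.det := by
    rw [hAfac, det_mul]
    congr 1
    rw [← Matrix.mul_assoc, det_one_add_mul_comm, hC1, Matrix.mul_assoc]
  -- det (lam•1 + XᵀX) = lam^d * det C2
  have hfac : lam • (1 : Matrix (Fin d) (Fin d) ℝ) + Xᵀ * X =
      (lam • 1) * (1 + (lam⁻¹ • (1 : Matrix (Fin d) (Fin d) ℝ)) * (Xᵀ * X)) := by
    rw [Matrix.mul_add, Matrix.mul_one]
    congr 1
    rw [smul_mul_assoc, Matrix.one_mul, smul_mul_assoc, Matrix.one_mul,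
      smul_smul, mul_inv_cancel₀ hlam.ne', one_smul]
  have hdetL : (lam • (1 : Matrix (Fin d) (Fin d) ℝ) + Xᵀ * X).det = lam ^ d * C2.det := by
    rw [hfac, det_mul, det_smul, det_one, mul_one, Fintype.card_fin]
    congr 1
    rw [← Matrix.mul_assoc, det_one_add_mul_comm, hC2, Matrix.mul_assoc]
  -- C2 - C1 psd
  have hsub : (C2 - C1).PosSemidef := by
    have h := (inv_bound hlam hBpos hpsd).mul_mul_conjTranspose_same X
    rw [conjTranspose_eq_transpose_of_trivial] at h
    have e : X * (lam⁻¹ • (1 : Matrix (Fin d) (Fin d) ℝ) - B⁻¹) * Xᵀ = C2 - C1 := by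
      rw [Matrix.mul_sub, Matrix.sub_mul, hC1, hC2]
      abel
    rwa [e] at h
  have hC1le : C1.det ≤ C2.det := det_mono hC1pos hsub
  have hC1detpos := hC1pos.det_pos
  have hLpos : 0 < (lam • (1 : Matrix (Fin d) (Fin d) ℝ) + Xᵀ * X).det :=
    ((smul_one_posdef hlam).add_posSemidef hXX).det_pos
  rw [div_le_div_iff₀ hLpos hAdetpos, hdetA, hdetL]
  calc lam ^ d * (B.det * C1.det) ≤ lam ^ d * (B.det * C2.det) := by
        have := mul_le_mul_of_nonneg_left hC1le (le_of_lt hBdetpos)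
        exact mul_le_mul_of_nonneg_left this (le_of_lt (pow_pos hlam d))
    _ = B.det * (lam ^ d * C2.det) := by ring
end

section
/- Suppose x_1, x_2, …, x_t ∈ ℝ^d satisfy ‖x_s‖₂ ≤ L for all 1 ≤ s ≤ t, and let V̄_t = λI_d + Σ_{s=1}^{t} x_s x_sᵀ for some λ > 0. Then det(V̄_t) ≤ (λ + tL²/d)^d. -/
open Matrix

lemma trace_eq_sum_eigs {n : Type*} [Fintype n] [DecidableEq n] {A : Matrix n n ℝ}
    (hA : A.IsHermitian) : A.trace = ∑ i, hA.eigenvalues i := by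
  conv_lhs => rw [hA.spectral_theorem]
  rw [Unitary.conjStarAlgAut_apply, Matrix.trace_mul_cycle]
  rw [Matrix.mem_unitaryGroup_iff'.mp (hA.eigenvectorUnitary).2, Matrix.one_mul]
  simp [Matrix.trace_diagonal]

lemma posSemidef_vecMulVec_self {n : Type*} [Fintype n] (v : n → ℝ) :
    (vecMulVec v v).PosSemidef := by
  have h := Matrix.posSemidef_conjTranspose_mul_self (Matrix.replicateRow Unit v)
  have : (Matrix.replicateRow Unit v)ᴴ * Matrix.replicateRow Unit v = vecMulVec v v := by
    ext i j
    simp [Matrix.mul_apply, Matrix.vecMulVec_apply, mul_comm]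
  rwa [this] at h

lemma det_le_trace_div_card_pow {n : Type*} [Fintype n] [DecidableEq n] [Nonempty n]
    {A : Matrix n n ℝ} (hA : A.PosSemidef) :
    A.det ≤ (A.trace / Fintype.card n) ^ Fintype.card n := by
  have hH := hA.isHermitian
  have hz : ∀ i, 0 ≤ hH.eigenvalues i := fun i => hA.eigenvalues_nonneg i
  have hcard : (0:ℝ) < Fintype.card n := by positivity
  have hdet : A.det = ∏ i, hH.eigenvalues i := by
    rw [hH.det_eq_prod_eigenvalues]; norm_num
  have hgm : ∏ i, (hH.eigenvalues i) ^ ((1:ℝ) / Fintype.card n) ≤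
      ∑ i, ((1:ℝ) / Fintype.card n) * hH.eigenvalues i := by
    apply Real.geom_mean_le_arith_mean_weighted
    · intro i _; positivity
    · rw [Finset.sum_const, Finset.card_univ, nsmul_eq_mul]; field_simp
    · intro i _; exact hz i
  have hsum : ∑ i, ((1:ℝ) / Fintype.card n) * hH.eigenvalues i
      = A.trace / Fintype.card n := by
    rw [trace_eq_sum_eigs hH, ← Finset.mul_sum, one_div, inv_mul_eq_div]
  have hpow : (∏ i, (hH.eigenvalues i) ^ ((1:ℝ) / Fintype.card n)) ^ (Fintype.card n)
      = ∏ i, hH.eigenvalues i := by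
    rw [← Finset.prod_pow]
    refine Finset.prod_congr rfl fun i _ => ?_
    rw [← Real.rpow_natCast ((hH.eigenvalues i) ^ ((1:ℝ) / Fintype.card n)) (Fintype.card n),
      ← Real.rpow_mul (hz i)]
    rw [one_div, inv_mul_cancel₀ (ne_of_gt hcard), Real.rpow_one]
  calc A.det = (∏ i, (hH.eigenvalues i) ^ ((1:ℝ) / Fintype.card n)) ^ (Fintype.card n) := by
        rw [hpow, hdet]
    _ ≤ (A.trace / Fintype.card n) ^ Fintype.card n := by
        apply pow_le_pow_left₀
        · exact Finset.prod_nonneg fun i _ => Real.rpow_nonneg (hz i) _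
        · rw [← hsum]; exact hgm

/-- Determinant–trace inequality (Lemma 10 of Abbasi-Yadkori et al. (2011)): if
`x_1, …, x_t ∈ ℝ^d` satisfy `‖x_s‖₂ ≤ L` and `V̄_t = λI + Σ_{s=1}^t x_s x_sᵀ` with
`λ > 0`, then `det(V̄_t) ≤ (λ + tL²/d)^d`. -/
theorem det_trace_inequality (d t : ℕ) (lam L : ℝ) (hlam : 0 < lam)
    (x : Fin t → Fin d → ℝ)
    (hx : ∀ s : Fin t, ‖(WithLp.equiv 2 (Fin d → ℝ)).symm (x s)‖ ≤ L) :
    (lam • (1 : Matrix (Fin d) (Fin d) ℝ) + ∑ s : Fin t, vecMulVec (x s) (x s)).det ≤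
      (lam + t * L ^ 2 / d) ^ d := by
  rcases Nat.eq_zero_or_pos d with hd | hd
  · subst hd
    rw [Matrix.det_fin_zero, pow_zero]
  haveI : Nonempty (Fin d) := Fin.pos_iff_nonempty.mp hd
  set V : Matrix (Fin d) (Fin d) ℝ :=
    lam • (1 : Matrix (Fin d) (Fin d) ℝ) + ∑ s : Fin t, vecMulVec (x s) (x s) with hVdef
  have h1 : (lam • (1 : Matrix (Fin d) (Fin d) ℝ)).PosSemidef := by
    rw [Matrix.smul_one_eq_diagonal]
    exact Matrix.PosSemidef.diagonal (fun i => le_of_lt hlam)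
  have h2 : (∑ s : Fin t, vecMulVec (x s) (x s)).PosSemidef := by
    exact Finset.sum_induction (fun s => vecMulVec (x s) (x s))
      (fun M : Matrix (Fin d) (Fin d) ℝ => M.PosSemidef)
      (fun a b ha hb => ha.add hb) Matrix.PosSemidef.zero
      (fun s _ => posSemidef_vecMulVec_self (x s))
  have hV : V.PosSemidef := h1.add h2
  have hnorm : ∀ s : Fin t, ∑ i, (x s i) ^ 2 ≤ L ^ 2 := by
    intro s
    have h1 : ‖(WithLp.equiv 2 (Fin d → ℝ)).symm (x s)‖ ^ 2 = ∑ i, (x s i) ^ 2 := by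
      rw [EuclideanSpace.norm_eq]
      rw [Real.sq_sqrt (by positivity)]
      simp [sq_abs]
    calc ∑ i, (x s i) ^ 2 = ‖(WithLp.equiv 2 (Fin d → ℝ)).symm (x s)‖ ^ 2 := h1.symm
      _ ≤ L ^ 2 := pow_le_pow_left₀ (norm_nonneg _) (hx s) 2
  have htrace : V.trace ≤ lam * d + t * L ^ 2 := by
    rw [hVdef, Matrix.trace_add, Matrix.trace_smul, Matrix.trace_one, Matrix.trace_sum]
    have : ∀ s : Fin t, (vecMulVec (x s) (x s)).trace = ∑ i, (x s i) ^ 2 := by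
      intro s
      rw [Matrix.trace]
      refine Finset.sum_congr rfl fun i _ => ?_
      simp [Matrix.diag, Matrix.vecMulVec_apply, sq]
    rw [Finset.sum_congr rfl fun s _ => this s]
    have hsum : ∑ s : Fin t, ∑ i, (x s i) ^ 2 ≤ ∑ _s : Fin t, L ^ 2 :=
      Finset.sum_le_sum fun s _ => hnorm s
    simp only [Finset.sum_const, Finset.card_univ, Fintype.card_fin, nsmul_eq_mul] at hsum
    simp only [smul_eq_mul, Fintype.card_fin]
    linarith
  have hcard : Fintype.card (Fin d) = d := Fintype.card_fin d
  have hdpos : (0:ℝ) < d := by exact_mod_cast hd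
  calc V.det ≤ (V.trace / Fintype.card (Fin d)) ^ Fintype.card (Fin d) :=
        det_le_trace_div_card_pow hV
    _ ≤ (lam + t * L ^ 2 / d) ^ d := by
        rw [hcard]
        apply pow_le_pow_left₀
        · rw [le_div_iff₀ hdpos, zero_mul]
          rw [trace_eq_sum_eigs hV.isHermitian]
          exact Finset.sum_nonneg fun i _ => hV.eigenvalues_nonneg i
        · rw [div_le_iff₀ hdpos]
          calc V.trace ≤ lam * d + t * L ^ 2 := htrace
            _ = (lam + t * L ^ 2 / d) * d := by field_simp
end

section
/- Let X_1, X_2, …, X_n be a sequence of vectors in ℝ^d, let V be a d×d symmetric positive definite matrix, and define V_t = V + Σ_{s=1}^{t} X_s X_sᵀ (so V_0 = V). Then log(det(V_n)/det(V)) ≤ Σ_{t=1}^{n} ‖X_t‖²_{V_{t−1}^{−1}}, where ‖x‖²_M = xᵀMx. -/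
open Matrix

lemma posSemidef_vecMulVec' (d : ℕ) (x : Fin d → ℝ) : (vecMulVec x x).PosSemidef := by
  refine .of_dotProduct_mulVec_nonneg ?_ ?_
  · ext i j
    simp [IsHermitian, vecMulVec_apply, conjTranspose_apply, mul_comm]
  · intro y
    have : y ⬝ᵥ (vecMulVec x x).mulVec y = (x ⬝ᵥ y) * (x ⬝ᵥ y) := by
      simp [dotProduct, mulVec, vecMulVec_apply, Finset.mul_sum, Finset.sum_mul]
      ring_nf
      rw [Finset.sum_comm]
      congr 1; ext i; congr 1; ext j; ring
    rw [show (star y : Fin d → ℝ) = y from rfl, this]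
    exact mul_self_nonneg _

lemma det_add_vecMulVec' (d : ℕ) (x : Fin d → ℝ) (W : Matrix (Fin d) (Fin d) ℝ)
    (hW : W.PosDef) :
    (W + vecMulVec x x).det = W.det * (1 + x ⬝ᵥ W⁻¹.mulVec x) := by
  have hU : IsUnit W.det := (hW.det_pos).ne'.isUnit
  rw [vecMulVec_eq Unit, det_add_replicateCol_mul_replicateRow hU]
  congr 1
  rw [Matrix.det_unique]
  simp only [Matrix.add_apply, Matrix.one_apply_eq, Matrix.mul_apply, Matrix.replicateRow_apply,
    Matrix.replicateCol_apply, dotProduct, mulVec, Finset.mul_sum, Finset.sum_mul]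
  congr 1
  rw [Finset.sum_comm]
  apply Finset.sum_congr rfl; intro j _
  apply Finset.sum_congr rfl; intro i _
  ring

/-- First inequality of Lemma 11 of Abbasi-Yadkori et al. (2011): for vectors
`X_1, X_2, …` in `ℝ^d` and a symmetric positive definite `V`, with
`V_t = V + Σ_{s=1}^t X_s X_sᵀ`, one has
`log(det(V_n)/det(V)) ≤ Σ_{t=1}^n ‖X_t‖²_{V_{t−1}⁻¹}`. -/
theorem log_det_ratio_le_sum_norms (d n : ℕ) (X : ℕ → Fin d → ℝ)
    (V : Matrix (Fin d) (Fin d) ℝ) (hV : V.PosDef) :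
    Real.log ((V + ∑ s ∈ Finset.range n, vecMulVec (X s) (X s)).det / V.det) ≤
      ∑ t ∈ Finset.range n,
        X t ⬝ᵥ (V + ∑ s ∈ Finset.range t, vecMulVec (X s) (X s))⁻¹.mulVec (X t) := by
  induction n with
  | zero => simp [div_self hV.det_pos.ne']
  | succ n ih =>
    set W := V + ∑ s ∈ Finset.range n, vecMulVec (X s) (X s) with hWdef
    have hPSD : (∑ s ∈ Finset.range n, vecMulVec (X s) (X s)).PosSemidef :=
      Finset.sum_induction _ Matrix.PosSemidef (fun a b ha hb => ha.add hb)
        (Matrix.PosSemidef.zero) (fun s _ => posSemidef_vecMulVec' d (X s))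
    have hW : W.PosDef := hV.add_posSemidef hPSD
    have hq : 0 ≤ X n ⬝ᵥ W⁻¹.mulVec (X n) := by
      have := hW.inv.posSemidef.dotProduct_mulVec_nonneg (X n)
      simpa using this
    have hsum : (V + ∑ s ∈ Finset.range (n + 1), vecMulVec (X s) (X s)) =
        W + vecMulVec (X n) (X n) := by
      rw [hWdef, Finset.sum_range_succ, add_assoc]
    rw [hsum, Finset.sum_range_succ, det_add_vecMulVec' d (X n) W hW]
    have ha : 0 < W.det := hW.det_pos
    have hb : 0 < V.det := hV.det_pos
    have h1q : (0:ℝ) < 1 + X n ⬝ᵥ W⁻¹.mulVec (X n) := by linarith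
    have hlog : Real.log (1 + X n ⬝ᵥ W⁻¹.mulVec (X n)) ≤ X n ⬝ᵥ W⁻¹.mulVec (X n) := by
      have := Real.log_le_sub_one_of_pos h1q
      linarith
    calc Real.log (W.det * (1 + X n ⬝ᵥ W⁻¹.mulVec (X n)) / V.det)
        = Real.log (W.det / V.det) + Real.log (1 + X n ⬝ᵥ W⁻¹.mulVec (X n)) := by
          rw [Real.log_div (by positivity) hb.ne', Real.log_mul ha.ne' h1q.ne',
            Real.log_div ha.ne' hb.ne']
          ring
      _ ≤ _ := add_le_add ih hlog
end

section
/- Let X_1, X_2, …, X_n be a sequence of vectors in ℝ^d, let V be a d×d symmetric positive definite matrix, and define V_t = V + Σ_{s=1}^{t} X_s X_sᵀ (so V_0 = V). Then Σ_{t=1}^{n} min{1, ‖X_t‖²_{V_{t−1}^{−1}}} ≤ 2(log det(V_n) − log det(V)), where ‖x‖²_M = xᵀMx. Moreover, if ‖X_t‖₂ ≤ L for all t, then 2(log det(V_n) − log det(V)) ≤ 2(d·log((trace(V) + nL²)/d) − log det(V)). -/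
open Matrix

lemma min_le_two_log {u : ℝ} (hu : 0 ≤ u) : min 1 u ≤ 2 * Real.log (1 + u) := by
  rcases le_total u 1 with h | h
  · rw [min_eq_right h]
    have h1 : Real.exp (u / 2) ≤ 1 + u := by
      have h2 : 1 - u / 2 ≤ Real.exp (-(u / 2)) := by
        have := Real.add_one_le_exp (-(u / 2)); linarith
      have h3 : Real.exp (u / 2) * Real.exp (-(u / 2)) = 1 := by
        rw [← Real.exp_add]; simp
      nlinarith [Real.exp_pos (u / 2), Real.exp_pos (-(u / 2))]
    have := (Real.le_log_iff_exp_le (by linarith : (0:ℝ) < 1 + u)).2 h1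
    linarith
  · rw [min_eq_left h]
    have h1 : Real.exp (2⁻¹ : ℝ) ≤ 1 + u := by
      have h2 : Real.exp (2⁻¹ : ℝ) ^ 2 = Real.exp 1 := by
        rw [← Real.exp_nat_mul]; norm_num
      nlinarith [Real.exp_pos (2⁻¹ : ℝ), Real.exp_one_lt_d9]
    have := (Real.le_log_iff_exp_le (by linarith : (0:ℝ) < 1 + u)).2 h1
    linarith

lemma vecMulVec_posSemidef {d : ℕ} (x : Fin d → ℝ) : (vecMulVec x x).PosSemidef := by
  rw [vecMulVec_eq Unit]
  have : replicateRow Unit x = (replicateCol Unit x)ᴴ := by rw [conjTranspose_replicateCol]; simp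
  rw [this]
  exact posSemidef_self_mul_conjTranspose _

lemma det_step {d : ℕ} {W : Matrix (Fin d) (Fin d) ℝ} (hW : W.PosDef) (x : Fin d → ℝ) :
    (W + vecMulVec x x).det = W.det * (1 + x ⬝ᵥ W⁻¹.mulVec x) := by
  rw [vecMulVec_eq Unit, det_add_replicateCol_mul_replicateRow hW.det_pos.ne'.isUnit]
  congr 1
  rw [det_unique]
  have : W⁻¹ * replicateCol Unit x = replicateCol Unit (W⁻¹ *ᵥ x) := by
    ext i j; simp [Matrix.mul_apply, mulVec, dotProduct]
  rw [Matrix.mul_assoc, this]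
  simp [replicateRow_mul_replicateCol_apply]

lemma trace_eq_sum_eig {d : ℕ} {A : Matrix (Fin d) (Fin d) ℝ} (hA : A.IsHermitian) :
    A.trace = ∑ i, hA.eigenvalues i := by
  nth_rewrite 1 [hA.spectral_theorem]
  rw [Unitary.conjStarAlgAut_apply, trace_mul_comm, ← Matrix.mul_assoc]
  have h1 : (star (hA.eigenvectorUnitary : Matrix (Fin d) (Fin d) ℝ)) *
      (hA.eigenvectorUnitary : Matrix (Fin d) (Fin d) ℝ) = 1 :=
    Unitary.coe_star_mul_self _
  rw [h1, Matrix.one_mul, trace_diagonal]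
  simp

lemma logdet_le {d : ℕ} (hd : 0 < d) {A : Matrix (Fin d) (Fin d) ℝ} (hA : A.PosDef) :
    Real.log A.det ≤ d * Real.log (A.trace / d) := by
  have heig := hA.eigenvalues_pos
  have hdet : A.det = ∏ i, hA.isHermitian.eigenvalues i := by
    rw [hA.isHermitian.det_eq_prod_eigenvalues]; norm_num
  have hlog : Real.log A.det = ∑ i, Real.log (hA.isHermitian.eigenvalues i) := by
    rw [hdet, Real.log_prod]
    exact fun i _ => (heig i).ne'
  have hjensen : ∑ i : Fin d, (d : ℝ)⁻¹ • Real.log (hA.isHermitian.eigenvalues i) ≤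
      Real.log (∑ i : Fin d, (d : ℝ)⁻¹ • hA.isHermitian.eigenvalues i) := by
    apply (strictConcaveOn_log_Ioi.concaveOn).le_map_sum
    · intro i _; positivity
    · simp [Finset.card_univ]
      field_simp
    · intro i _; exact heig i
  have hd' : (0:ℝ) < d := by exact_mod_cast hd
  rw [hlog, trace_eq_sum_eig hA.isHermitian]
  have h2 : (∑ i : Fin d, (d : ℝ)⁻¹ • hA.isHermitian.eigenvalues i) =
      (∑ i, hA.isHermitian.eigenvalues i) / d := by
    rw [← Finset.smul_sum]; simp [smul_eq_mul, div_eq_inv_mul]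
  rw [h2] at hjensen
  have h3 : (∑ i : Fin d, (d : ℝ)⁻¹ • Real.log (hA.isHermitian.eigenvalues i)) =
      (∑ i, Real.log (hA.isHermitian.eigenvalues i)) / d := by
    rw [← Finset.smul_sum]; simp [smul_eq_mul, div_eq_inv_mul]
  rw [h3, div_le_iff₀ hd'] at hjensen
  linarith [hjensen]

/-- Elliptical potential lemma (second part of Lemma 11 of Abbasi-Yadkori et al. (2011)):
for vectors `X_1, X_2, …` in `ℝ^d`, symmetric positive definite `V`, and
`V_t = V + Σ_{s=1}^t X_s X_sᵀ`, one has
`Σ_{t=1}^n min{1, ‖X_t‖²_{V_{t−1}⁻¹}} ≤ 2(log det(V_n) − log det(V))`; moreover, if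
`‖X_t‖₂ ≤ L` for all `t`, then
`2(log det(V_n) − log det(V)) ≤ 2(d·log((trace(V) + nL²)/d) − log det(V))`. -/
theorem elliptical_potential (d n : ℕ) (L : ℝ) (X : ℕ → Fin d → ℝ)
    (V : Matrix (Fin d) (Fin d) ℝ) (hV : V.PosDef) :
    (∑ t ∈ Finset.range n,
        min 1 (X t ⬝ᵥ (V + ∑ s ∈ Finset.range t, vecMulVec (X s) (X s))⁻¹.mulVec (X t))) ≤
      2 * (Real.log (V + ∑ s ∈ Finset.range n, vecMulVec (X s) (X s)).det -
        Real.log V.det) ∧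
    ((∀ t : ℕ, ‖(WithLp.equiv 2 (Fin d → ℝ)).symm (X t)‖ ≤ L) →
      2 * (Real.log (V + ∑ s ∈ Finset.range n, vecMulVec (X s) (X s)).det -
          Real.log V.det) ≤
        2 * (d * Real.log ((V.trace + n * L ^ 2) / d) - Real.log V.det)) := by
  have hW : ∀ t : ℕ, (V + ∑ s ∈ Finset.range t, vecMulVec (X s) (X s)).PosDef := by
    intro t
    apply hV.add_posSemidef
    induction t with
    | zero => simpa using Matrix.PosSemidef.zero
    | succ t ih => rw [Finset.sum_range_succ]; exact ih.add (vecMulVec_posSemidef _)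
  have hu : ∀ t : ℕ,
      0 ≤ X t ⬝ᵥ (V + ∑ s ∈ Finset.range t, vecMulVec (X s) (X s))⁻¹.mulVec (X t) := by
    intro t
    simpa using ((hW t).inv).posSemidef.dotProduct_mulVec_nonneg (X t)
  constructor
  · -- part 1, by induction on n
    induction n with
    | zero => simp
    | succ n ih =>
      rw [Finset.sum_range_succ]
      set u := X n ⬝ᵥ (V + ∑ s ∈ Finset.range n, vecMulVec (X s) (X s))⁻¹.mulVec (X n) with hudef
      have hstep : Real.log (V + ∑ s ∈ Finset.range (n+1), vecMulVec (X s) (X s)).det =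
          Real.log (V + ∑ s ∈ Finset.range n, vecMulVec (X s) (X s)).det +
            Real.log (1 + u) := by
        have hu1 : (0:ℝ) < 1 + u := by
          have := hu n; rw [← hudef] at this; linarith
        rw [Finset.sum_range_succ, ← add_assoc, det_step (hW n), Real.log_mul
          (hW n).det_pos.ne' hu1.ne']
      have h2 := min_le_two_log (hu n)
      rw [← hudef] at h2
      rw [hstep]
      linarith
  · -- part 2
    intro hL
    rcases Nat.eq_zero_or_pos d with hd | hd
    · subst hd
      have h1 : (V + ∑ s ∈ Finset.range n, vecMulVec (X s) (X s)).det = 1 :=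
        Matrix.det_fin_zero
      have h2 : V.det = 1 := Matrix.det_fin_zero
      rw [h1, h2]
      norm_num
    · have hd' : (0:ℝ) < d := by exact_mod_cast hd
      have hA := hW n
      -- trace bound
      have htr : (V + ∑ s ∈ Finset.range n, vecMulVec (X s) (X s)).trace ≤
          V.trace + n * L ^ 2 := by
        rw [trace_add, trace_sum]
        have hterm : ∀ s : ℕ, (vecMulVec (X s) (X s)).trace ≤ L ^ 2 := by
          intro s
          have hnorm := hL s
          have hns : ‖(WithLp.equiv 2 (Fin d → ℝ)).symm (X s)‖ ^ 2 = ∑ i, X s i ^ 2 := by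
            rw [EuclideanSpace.norm_eq]
            rw [Real.sq_sqrt (by positivity)]
            simp [sq_abs]
          have htrv : (vecMulVec (X s) (X s)).trace = ∑ i, X s i ^ 2 := by
            simp [trace, diag, vecMulVec, sq]
          rw [htrv, ← hns]
          exact pow_le_pow_left₀ (norm_nonneg _) hnorm 2
        calc V.trace + ∑ s ∈ Finset.range n, (vecMulVec (X s) (X s)).trace
            ≤ V.trace + ∑ s ∈ Finset.range n, L ^ 2 := by
              gcongr with s hs; exact hterm s
          _ = V.trace + n * L ^ 2 := by rw [Finset.sum_const, Finset.card_range]; ring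
      have htrpos : 0 < (V + ∑ s ∈ Finset.range n, vecMulVec (X s) (X s)).trace := by
        rw [trace_eq_sum_eig hA.isHermitian]
        exact Finset.sum_pos (fun i _ => hA.eigenvalues_pos i)
          (Finset.univ_nonempty_iff.2 (Fin.pos_iff_nonempty.1 hd))
      have h1 := logdet_le hd hA
      have h2 : Real.log ((V + ∑ s ∈ Finset.range n, vecMulVec (X s) (X s)).trace / d) ≤
          Real.log ((V.trace + n * L ^ 2) / d) := by
        apply Real.log_le_log (by positivity)
        gcongr
      have h3 : (d:ℝ) * Real.log ((V + ∑ s ∈ Finset.range n, vecMulVec (X s) (X s)).trace / d)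
          ≤ d * Real.log ((V.trace + n * L ^ 2) / d) := by
        exact mul_le_mul_of_nonneg_left h2 hd'.le
      linarith
end
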